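/- Assume p = 1/2. With the notation of the CEV scale data, the function ψ is three times differentiable on (0,1) and sup_{x∈(0,1)} ( |ψ'(x)| / max(log(1/x), 1) + x |ψ''(x)| + x² |ψ'''(x)| ) < ∞. -/

import Mathlib

open MeasureTheory Set intervalIntegral

/-- The scale density `s(x) = exp(−(2μ/(σ²(2−2p))) x^{2−2p})` of the CEV diffusion. -/
noncomputable def sDen (μ σ p : ℝ) (x : ℝ) : ℝ :=
  Real.exp (-(2 * μ / (σ ^ 2 * (2 - 2 * p))) * x ^ (2 - 2 * p))

/-- The scale function `S(x) = ∫₀ˣ s(z) dz` of the CEV diffusion. -/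
noncomputable def Sfun (μ σ p : ℝ) (x : ℝ) : ℝ := ∫ z in (0 : ℝ)..x, sDen μ σ p z

/-- The speed density `m(y) = 1/(σ² y^{2p} s(y))` of the CEV diffusion. -/
noncomputable def mDen (μ σ p : ℝ) (y : ℝ) : ℝ := 1 / (σ ^ 2 * y ^ (2 * p) * sDen μ σ p y)

/-- `φ(x) = S(x)/S(1)`, the probability that the CEV diffusion started at `x` reaches
`1` before `0`. -/
noncomputable def phiFun (μ σ p : ℝ) (x : ℝ) : ℝ := Sfun μ σ p x / Sfun μ σ p 1

/-- `ψ(x) = 2 φ(x) ∫ₓ¹ (S(1) − S(y)) m(y) dy + 2 (1 − φ(x)) ∫₀ˣ S(y) m(y) dy`, the expectation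
of the exit time of the CEV diffusion from `(0,1)` started at `x`. -/
noncomputable def psiFun (μ σ p : ℝ) (x : ℝ) : ℝ :=
  2 * phiFun μ σ p x * (∫ y in x..(1 : ℝ), (Sfun μ σ p 1 - Sfun μ σ p y) * mDen μ σ p y)
    + 2 * (1 - phiFun μ σ p x) * (∫ y in (0 : ℝ)..x, Sfun μ σ p y * mDen μ σ p y)

/-- Lemma A.2 (case `p = 1/2`): `ψ` is three times differentiable on `(0,1)` and
`sup_{x∈(0,1)} (|ψ'(x)|/max(log(1/x),1) + x|ψ''(x)| + x²|ψ'''(x)|) < ∞`. -/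
theorem stmt11 (μ σ p : ℝ) (hσ : 0 < σ) (hp : p = 1 / 2) :
    (∀ x ∈ Ioo (0 : ℝ) 1,
      DifferentiableAt ℝ (psiFun μ σ p) x ∧
      DifferentiableAt ℝ (deriv (psiFun μ σ p)) x ∧
      DifferentiableAt ℝ (deriv (deriv (psiFun μ σ p))) x) ∧
    ∃ C : ℝ, ∀ x ∈ Ioo (0 : ℝ) 1,
      |deriv (psiFun μ σ p) x| / max (Real.log (1 / x)) 1
        + x * |deriv (deriv (psiFun μ σ p)) x|
        + x ^ 2 * |deriv (deriv (deriv (psiFun μ σ p))) x| ≤ C := by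
  subst hp
  have hσ2 : (0:ℝ) < σ ^ 2 := by positivity
  obtain ⟨c, hc⟩ : ∃ t : ℝ, t = 2 * μ / σ ^ 2 := ⟨_, rfl⟩
  -- explicit formulas
  have hs_eq : ∀ x, sDen μ σ (1/2) x = Real.exp (-c * x) := by
    intro x; unfold sDen; norm_num [Real.rpow_one, hc]
  have hm_eq : ∀ y, mDen μ σ (1/2) y = 1 / (σ ^ 2 * y * Real.exp (-c * y)) := by
    intro y; unfold mDen sDen; norm_num [Real.rpow_one, hc]
  have hs_cont : Continuous (sDen μ σ (1/2)) := by
    have h1 : sDen μ σ (1/2) = fun x => Real.exp (-c * x) := funext hs_eq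
    rw [h1]; exact Real.continuous_exp.comp (continuous_const.mul continuous_id)
  have hs_pos : ∀ x, 0 < sDen μ σ (1/2) x := fun x => (hs_eq x) ▸ Real.exp_pos _
  obtain ⟨E, hE⟩ : ∃ t : ℝ, t = Real.exp |c| := ⟨_, rfl⟩
  have hE_pos : 0 < E := hE ▸ Real.exp_pos _
  have hs_le : ∀ x ∈ Icc (0:ℝ) 1, sDen μ σ (1/2) x ≤ E := by
    intro x hx; rw [hs_eq, hE]
    apply Real.exp_le_exp.2
    nlinarith [neg_abs_le c, le_abs_self c, hx.1, hx.2, abs_nonneg c]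
  have hS_deriv : ∀ x, HasDerivAt (Sfun μ σ (1/2)) (sDen μ σ (1/2) x) x := by
    intro x
    exact intervalIntegral.integral_hasDerivAt_right (hs_cont.intervalIntegrable _ _)
      (hs_cont.stronglyMeasurableAtFilter _ _) hs_cont.continuousAt
  have hS_cont : Continuous (Sfun μ σ (1/2)) :=
    continuous_iff_continuousAt.2 fun x => (hS_deriv x).continuousAt
  have hS0 : Sfun μ σ (1/2) 0 = 0 := intervalIntegral.integral_same
  obtain ⟨S1, hS1def⟩ : ∃ t : ℝ, t = Sfun μ σ (1/2) 1 := ⟨_, rfl⟩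
  have hS1_pos : 0 < S1 := by
    rw [hS1def]
    exact intervalIntegral.intervalIntegral_pos_of_pos (hs_cont.intervalIntegrable 0 1)
      hs_pos one_pos
  have hS_nonneg : ∀ y ∈ Icc (0:ℝ) 1, 0 ≤ Sfun μ σ (1/2) y := by
    intro y hy
    exact intervalIntegral.integral_nonneg hy.1 fun z _ => (hs_pos z).le
  have hS_le_S1 : ∀ y ∈ Icc (0:ℝ) 1, Sfun μ σ (1/2) y ≤ S1 := by
    intro y hy
    have hadd : Sfun μ σ (1/2) y + (∫ z in y..1, sDen μ σ (1/2) z) = S1 := by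
      rw [hS1def]
      exact intervalIntegral.integral_add_adjacent_intervals
        (hs_cont.intervalIntegrable 0 y) (hs_cont.intervalIntegrable y 1)
    have : 0 ≤ ∫ z in y..1, sDen μ σ (1/2) z :=
      intervalIntegral.integral_nonneg hy.2 fun z _ => (hs_pos z).le
    linarith
  have hS_le : ∀ y ∈ Icc (0:ℝ) 1, Sfun μ σ (1/2) y ≤ E * y := by
    intro y hy
    have h1 : Sfun μ σ (1/2) y ≤ ∫ _z in (0:ℝ)..y, E := by
      apply intervalIntegral.integral_mono_on hy.1 (hs_cont.intervalIntegrable 0 y)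
        intervalIntegrable_const
      intro z hz
      exact hs_le z ⟨hz.1, hz.2.trans hy.2⟩
    simpa [intervalIntegral.integral_const, smul_eq_mul, mul_comm] using h1
  -- speed density bounds
  have hm_pos : ∀ y ∈ Ioc (0:ℝ) 1, 0 < mDen μ σ (1/2) y := by
    intro y hy
    rw [hm_eq]
    have h0 : 0 < σ ^ 2 * y * Real.exp (-c * y) :=
      mul_pos (mul_pos hσ2 hy.1) (Real.exp_pos _)
    exact one_div_pos.2 h0
  have hm_le : ∀ y ∈ Ioc (0:ℝ) 1, mDen μ σ (1/2) y ≤ E / (σ ^ 2 * y) := by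
    intro y hy
    rw [hm_eq]
    have hy0 : 0 < y := hy.1
    have hexp : Real.exp (-|c|) ≤ Real.exp (-c * y) := by
      apply Real.exp_le_exp.2
      nlinarith [neg_abs_le c, le_abs_self c, hy.1.le, hy.2, abs_nonneg c]
    have hden : σ ^ 2 * y * Real.exp (-|c|) ≤ σ ^ 2 * y * Real.exp (-c * y) :=
      mul_le_mul_of_nonneg_left hexp (mul_nonneg hσ2.le hy0.le)
    have h1 : 1 / (σ ^ 2 * y * Real.exp (-c * y)) ≤ 1 / (σ ^ 2 * y * Real.exp (-|c|)) :=
      one_div_le_one_div_of_le (mul_pos (mul_pos hσ2 hy0) (Real.exp_pos _)) hden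
    have h2 : 1 / (σ ^ 2 * y * Real.exp (-|c|)) = E / (σ ^ 2 * y) := by
      rw [hE, Real.exp_neg]
      field_simp
    linarith [h1, h2 ▸ h1]
  -- continuity of m, g, h on (0,∞)
  have hm_contOn : ContinuousOn (mDen μ σ (1/2)) (Ioi 0) := by
    have h1 : mDen μ σ (1/2) = fun y => 1 / (σ ^ 2 * y * Real.exp (-c * y)) := funext hm_eq
    rw [h1]
    apply ContinuousOn.div continuousOn_const
    · exact ((continuous_const.mul continuous_id).mul
        (Real.continuous_exp.comp (continuous_const.mul continuous_id))).continuousOn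
    · intro y hy
      have hy0 : (0:ℝ) < y := hy
      exact (mul_pos (mul_pos hσ2 hy0) (Real.exp_pos _)).ne'
  have hh_contOn : ContinuousOn (fun y => (S1 - Sfun μ σ (1/2) y) * mDen μ σ (1/2) y) (Ioi 0) :=
    ((continuous_const.sub hS_cont).continuousOn).mul hm_contOn
  have hg_contOn : ContinuousOn (fun y => Sfun μ σ (1/2) y * mDen μ σ (1/2) y) (Ioi 0) :=
    (hS_cont.continuousOn).mul hm_contOn
  obtain ⟨Cg, hCg⟩ : ∃ t : ℝ, t = E * E / σ ^ 2 := ⟨_, rfl⟩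
  have hCg_pos : 0 < Cg := by rw [hCg]; exact div_pos (mul_pos hE_pos hE_pos) hσ2
  have hg_bound : ∀ y ∈ Ioc (0:ℝ) 1, |Sfun μ σ (1/2) y * mDen μ σ (1/2) y| ≤ Cg := by
    intro y hy
    have hy' : y ∈ Icc (0:ℝ) 1 := ⟨hy.1.le, hy.2⟩
    have h0 : 0 ≤ Sfun μ σ (1/2) y * mDen μ σ (1/2) y :=
      mul_nonneg (hS_nonneg y hy') (hm_pos y hy).le
    rw [abs_of_nonneg h0]
    have h1 : Sfun μ σ (1/2) y * mDen μ σ (1/2) y ≤ (E * y) * (E / (σ ^ 2 * y)) :=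
      mul_le_mul (hS_le y hy') (hm_le y hy) (hm_pos y hy).le (mul_nonneg hE_pos.le hy.1.le)
    have h2 : (E * y) * (E / (σ ^ 2 * y)) = Cg := by
      rw [hCg]; field_simp [hy.1.ne']
    linarith [h2 ▸ h1]
  have hg_int : ∀ x ∈ Ioc (0:ℝ) 1,
      IntervalIntegrable (fun y => Sfun μ σ (1/2) y * mDen μ σ (1/2) y) volume 0 x := by
    intro x hx
    rw [intervalIntegrable_iff_integrableOn_Ioc_of_le hx.1.le]
    apply Measure.integrableOn_of_bounded measure_Ioc_lt_top.ne
    · have hmm : Measurable (mDen μ σ (1/2)) := by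
        have h1 : mDen μ σ (1/2) = fun y => 1 / (σ ^ 2 * y * Real.exp (-c * y)) :=
          funext hm_eq
        rw [h1]
        exact (measurable_const.div
          (((measurable_const.mul measurable_id).mul
            (Real.measurable_exp.comp (measurable_const.mul measurable_id)))))
      exact (hS_cont.measurable.mul hmm).aestronglyMeasurable
    · rw [ae_restrict_iff' measurableSet_Ioc]
      exact Filter.Eventually.of_forall fun y hy => by
        rw [Real.norm_eq_abs]
        exact hg_bound y ⟨hy.1, hy.2.trans hx.2⟩
  -- now the derivative structure
  obtain ⟨A, hAdef⟩ : ∃ f : ℝ → ℝ, f =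
      fun t => ∫ y in t..(1:ℝ), (Sfun μ σ (1/2) 1 - Sfun μ σ (1/2) y) * mDen μ σ (1/2) y :=
    ⟨_, rfl⟩
  obtain ⟨B, hBdef⟩ : ∃ f : ℝ → ℝ, f =
      fun t => ∫ y in (0:ℝ)..t, Sfun μ σ (1/2) y * mDen μ σ (1/2) y := ⟨_, rfl⟩
  obtain ⟨D1, hD1def⟩ : ∃ f : ℝ → ℝ, f =
      fun t => 2 / S1 * (sDen μ σ (1/2) t * (A t - B t)) := ⟨_, rfl⟩
  obtain ⟨D2, hD2def⟩ : ∃ f : ℝ → ℝ, f = fun t => -c * D1 t - 2 / σ ^ 2 * t⁻¹ := ⟨_, rfl⟩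
  obtain ⟨D3, hD3def⟩ : ∃ f : ℝ → ℝ, f = fun t => -c * D2 t + 2 / σ ^ 2 * (t ^ 2)⁻¹ :=
    ⟨_, rfl⟩
  have hs_deriv : ∀ t, HasDerivAt (sDen μ σ (1/2)) (-c * sDen μ σ (1/2) t) t := by
    intro t
    have hfun : sDen μ σ (1/2) = fun u => Real.exp (-c * u) := funext hs_eq
    have h1 : HasDerivAt (fun u : ℝ => Real.exp (-c * u)) (Real.exp (-c * t) * (-c * 1)) t :=
      ((hasDerivAt_id t).const_mul (-c)).exp
    rw [hfun]
    simpa [mul_comm] using h1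
  have hAB_deriv : ∀ x ∈ Ioo (0:ℝ) 1,
      HasDerivAt A (-((S1 - Sfun μ σ (1/2) x) * mDen μ σ (1/2) x)) x ∧
      HasDerivAt B (Sfun μ σ (1/2) x * mDen μ σ (1/2) x) x := by
    intro x hx
    obtain ⟨hx0, hx1⟩ := hx
    constructor
    · rw [hAdef]
      have hsub : uIcc x 1 ⊆ Ioi (0:ℝ) := by
        rw [uIcc_of_le hx1.le]
        exact fun y hy => lt_of_lt_of_le hx0 hy.1
      have hh_int : IntervalIntegrable
          (fun y => (S1 - Sfun μ σ (1/2) y) * mDen μ σ (1/2) y) volume x 1 :=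
        (hh_contOn.mono hsub).intervalIntegrable
      have := intervalIntegral.integral_hasDerivAt_left hh_int
        (hh_contOn.stronglyMeasurableAtFilter isOpen_Ioi x hx0)
        (hh_contOn.continuousAt (Ioi_mem_nhds hx0))
      simpa [hS1def] using this
    · rw [hBdef]
      exact intervalIntegral.integral_hasDerivAt_right (hg_int x ⟨hx0, hx1.le⟩)
        (hg_contOn.stronglyMeasurableAtFilter isOpen_Ioi x hx0)
        (hg_contOn.continuousAt (Ioi_mem_nhds hx0))
  have hPsi_deriv : ∀ x ∈ Ioo (0:ℝ) 1, HasDerivAt (psiFun μ σ (1/2)) (D1 x) x := by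
    intro x hx
    obtain ⟨hA_deriv, hB_deriv⟩ := hAB_deriv x hx
    have hPsiEq : psiFun μ σ (1/2) = fun t =>
        2 * (Sfun μ σ (1/2) t / S1) * A t + 2 * (1 - Sfun μ σ (1/2) t / S1) * B t := by
      funext t
      simp only [psiFun, phiFun, hAdef, hBdef, hS1def]
    rw [hPsiEq]
    have H1 : HasDerivAt (fun t => 2 * (Sfun μ σ (1/2) t / S1) * A t)
        (2 * (sDen μ σ (1/2) x / S1) * A x +
          2 * (Sfun μ σ (1/2) x / S1) * (-((S1 - Sfun μ σ (1/2) x) * mDen μ σ (1/2) x))) x :=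
      (((hS_deriv x).div_const S1).const_mul 2).mul hA_deriv
    have H2 : HasDerivAt (fun t => 2 * (1 - Sfun μ σ (1/2) t / S1) * B t)
        (2 * (0 - sDen μ σ (1/2) x / S1) * B x +
          2 * (1 - Sfun μ σ (1/2) x / S1) * (Sfun μ σ (1/2) x * mDen μ σ (1/2) x)) x :=
      (((hasDerivAt_const x (1:ℝ)).sub ((hS_deriv x).div_const S1)).const_mul 2).mul hB_deriv
    have H := H1.add H2
    refine H.congr_deriv ?_
    rw [hD1def]
    field_simp [hS1_pos.ne']
    ring
  have hD1_deriv : ∀ x ∈ Ioo (0:ℝ) 1, HasDerivAt D1 (D2 x) x := by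
    intro x hx
    obtain ⟨hA_deriv, hB_deriv⟩ := hAB_deriv x hx
    have hd : HasDerivAt (fun t => 2 / S1 * (sDen μ σ (1/2) t * (A t - B t)))
        (2 / S1 * (-c * sDen μ σ (1/2) x * (A x - B x) +
          sDen μ σ (1/2) x *
            (-((S1 - Sfun μ σ (1/2) x) * mDen μ σ (1/2) x) -
              Sfun μ σ (1/2) x * mDen μ σ (1/2) x))) x :=
      ((hs_deriv x).mul (hA_deriv.sub hB_deriv)).const_mul (2 / S1)
    rw [hD1def, hD2def]
    convert hd using 1
    simp only [hD1def]
    rw [hm_eq x, hs_eq x]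
    have hx0 : x ≠ 0 := hx.1.ne'
    field_simp [hS1_pos.ne', Real.exp_ne_zero]
    ring
  have hD2_deriv : ∀ x ∈ Ioo (0:ℝ) 1, HasDerivAt D2 (D3 x) x := by
    intro x hx
    have hd := ((hD1_deriv x hx).const_mul (-c)).sub
      ((hasDerivAt_inv hx.1.ne').const_mul (2 / σ ^ 2))
    rw [hD2def, hD3def]
    refine hd.congr_deriv ?_
    show _ = -c * D2 x + 2 / σ ^ 2 * (x ^ 2)⁻¹
    ring
  -- derivative identifications
  have hderiv1 : ∀ x ∈ Ioo (0:ℝ) 1, deriv (psiFun μ σ (1/2)) x = D1 x :=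
    fun x hx => (hPsi_deriv x hx).deriv
  have hEq1 : ∀ x ∈ Ioo (0:ℝ) 1, deriv (psiFun μ σ (1/2)) =ᶠ[nhds x] D1 :=
    fun x hx => Filter.eventuallyEq_of_mem (isOpen_Ioo.mem_nhds hx) hderiv1
  have hderiv2at : ∀ x ∈ Ioo (0:ℝ) 1, HasDerivAt (deriv (psiFun μ σ (1/2))) (D2 x) x :=
    fun x hx => (hD1_deriv x hx).congr_of_eventuallyEq (hEq1 x hx)
  have hderiv2 : ∀ x ∈ Ioo (0:ℝ) 1, deriv (deriv (psiFun μ σ (1/2))) x = D2 x :=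
    fun x hx => (hderiv2at x hx).deriv
  have hEq2 : ∀ x ∈ Ioo (0:ℝ) 1, deriv (deriv (psiFun μ σ (1/2))) =ᶠ[nhds x] D2 :=
    fun x hx => Filter.eventuallyEq_of_mem (isOpen_Ioo.mem_nhds hx) hderiv2
  have hderiv3at : ∀ x ∈ Ioo (0:ℝ) 1,
      HasDerivAt (deriv (deriv (psiFun μ σ (1/2)))) (D3 x) x :=
    fun x hx => (hD2_deriv x hx).congr_of_eventuallyEq (hEq2 x hx)
  have hderiv3 : ∀ x ∈ Ioo (0:ℝ) 1, deriv (deriv (deriv (psiFun μ σ (1/2)))) x = D3 x :=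
    fun x hx => (hderiv3at x hx).deriv
  refine ⟨fun x hx => ⟨(hPsi_deriv x hx).differentiableAt,
    (hderiv2at x hx).differentiableAt, (hderiv3at x hx).differentiableAt⟩, ?_⟩
  -- bounds
  obtain ⟨Ch, hCh⟩ : ∃ t : ℝ, t = S1 * E / σ ^ 2 := ⟨_, rfl⟩
  have hCh_pos : 0 < Ch := by rw [hCh]; exact div_pos (mul_pos hS1_pos hE_pos) hσ2
  have hA_bound : ∀ x ∈ Ioo (0:ℝ) 1, |A x| ≤ Ch * Real.log (1 / x) := by
    intro x hx
    obtain ⟨hx0, hx1⟩ := hx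
    have hsub : uIcc x 1 ⊆ Ioi (0:ℝ) := by
      rw [uIcc_of_le hx1.le]
      exact fun y hy => lt_of_lt_of_le hx0 hy.1
    have hh_int : IntervalIntegrable
        (fun y => (S1 - Sfun μ σ (1/2) y) * mDen μ σ (1/2) y) volume x 1 :=
      (hh_contOn.mono hsub).intervalIntegrable
    have habs : |A x| ≤ ∫ y in x..1, |(S1 - Sfun μ σ (1/2) y) * mDen μ σ (1/2) y| := by
      rw [hAdef]
      simp only [← hS1def]
      exact intervalIntegral.abs_integral_le_integral_abs hx1.le
    have hmono : (∫ y in x..1, |(S1 - Sfun μ σ (1/2) y) * mDen μ σ (1/2) y|) ≤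
        ∫ y in x..1, Ch * y⁻¹ := by
      apply intervalIntegral.integral_mono_on hx1.le hh_int.abs
      · apply ContinuousOn.intervalIntegrable
        apply continuousOn_const.mul
        apply ContinuousOn.inv₀ continuousOn_id
        intro y hy
        have := hsub hy
        exact (lt_of_lt_of_le hx0 (by rw [uIcc_of_le hx1.le] at hy; exact hy.1)).ne'
      · intro y hy
        have hy01 : y ∈ Ioc (0:ℝ) 1 := ⟨lt_of_lt_of_le hx0 hy.1, hy.2⟩
        have hy' : y ∈ Icc (0:ℝ) 1 := ⟨hy01.1.le, hy01.2⟩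
        have h0 : 0 ≤ (S1 - Sfun μ σ (1/2) y) * mDen μ σ (1/2) y :=
          mul_nonneg (by linarith [hS_le_S1 y hy']) (hm_pos y hy01).le
        rw [abs_of_nonneg h0]
        have h1 : (S1 - Sfun μ σ (1/2) y) * mDen μ σ (1/2) y ≤ S1 * (E / (σ ^ 2 * y)) :=
          mul_le_mul (by linarith [hS_nonneg y hy']) (hm_le y hy01) (hm_pos y hy01).le
            hS1_pos.le
        have h2 : S1 * (E / (σ ^ 2 * y)) = Ch * y⁻¹ := by
          rw [hCh]; field_simp
        linarith [h2 ▸ h1]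
    have hcalc : (∫ y in x..1, Ch * y⁻¹) = Ch * Real.log (1 / x) := by
      rw [intervalIntegral.integral_const_mul, integral_inv_of_pos hx0 one_pos]
    linarith [habs.trans (hmono.trans_eq hcalc)]
  have hB_bound : ∀ x ∈ Ioo (0:ℝ) 1, |B x| ≤ Cg := by
    intro x hx
    obtain ⟨hx0, hx1⟩ := hx
    have habs : |B x| ≤ ∫ y in (0:ℝ)..x, |Sfun μ σ (1/2) y * mDen μ σ (1/2) y| := by
      rw [hBdef]
      exact intervalIntegral.abs_integral_le_integral_abs hx0.le
    have hmono : (∫ y in (0:ℝ)..x, |Sfun μ σ (1/2) y * mDen μ σ (1/2) y|) ≤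
        ∫ _y in (0:ℝ)..x, Cg := by
      apply intervalIntegral.integral_mono_on hx0.le (hg_int x ⟨hx0, hx1.le⟩).abs
        intervalIntegrable_const
      intro y hy
      rcases eq_or_lt_of_le hy.1 with h | h
      · have hz : Sfun μ σ (1/2) 0 * mDen μ σ (1/2) 0 = 0 := by rw [hS0, zero_mul]
        rw [← h, hz, abs_zero]
        exact hCg_pos.le
      · exact hg_bound y ⟨h, hy.2.trans hx1.le⟩
    have hconst : (∫ _y in (0:ℝ)..x, Cg) = x * Cg := by
      rw [intervalIntegral.integral_const, smul_eq_mul, sub_zero]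
    have hB1 : |B x| ≤ x * Cg := habs.trans (hmono.trans_eq hconst)
    exact hB1.trans (mul_le_of_le_one_left hCg_pos.le hx1.le)
  -- elementary facts about log
  have hlog_facts : ∀ x ∈ Ioo (0:ℝ) 1,
      0 ≤ Real.log (1 / x) ∧ x * Real.log (1 / x) ≤ 1 := by
    intro x hx
    obtain ⟨hx0, hx1⟩ := hx
    have h1 : (1:ℝ) ≤ 1 / x := by rw [le_div_iff₀ hx0]; linarith
    constructor
    · exact Real.log_nonneg h1
    · have h2 : Real.log (1 / x) ≤ 1 / x - 1 :=
        Real.log_le_sub_one_of_pos (one_div_pos.2 hx0)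
      have h3 : x * Real.log (1 / x) ≤ x * (1 / x - 1) :=
        mul_le_mul_of_nonneg_left h2 hx0.le
      have h4 : x * (1 / x - 1) = 1 - x := by field_simp
      linarith only [h3, h4, hx0, hx1]
  obtain ⟨K0, hK0⟩ : ∃ t : ℝ, t = 2 / S1 * E * (Ch + Cg) := ⟨_, rfl⟩
  have hK0_pos : 0 < K0 := by
    rw [hK0]
    exact mul_pos (mul_pos (div_pos two_pos hS1_pos) hE_pos) (by linarith)
  obtain ⟨K2, hK2⟩ : ∃ t : ℝ, t = |c| * K0 + 2 / σ ^ 2 := ⟨_, rfl⟩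
  have hK2_pos : 0 < K2 := by
    rw [hK2]
    exact add_pos_of_nonneg_of_pos (mul_nonneg (abs_nonneg c) hK0_pos.le)
      (div_pos two_pos hσ2)
  obtain ⟨K3, hK3⟩ : ∃ t : ℝ, t = |c| * K2 + 2 / σ ^ 2 := ⟨_, rfl⟩
  refine ⟨K0 + K2 + K3, fun x hx => ?_⟩
  obtain ⟨hx0, hx1⟩ := hx
  have hxIoo : x ∈ Ioo (0:ℝ) 1 := ⟨hx0, hx1⟩
  set L : ℝ := max (Real.log (1 / x)) 1 with hL
  have hL1 : (1:ℝ) ≤ L := le_max_right _ _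
  have hLpos : (0:ℝ) < L := lt_of_lt_of_le one_pos hL1
  have hLlog : Real.log (1 / x) ≤ L := le_max_left _ _
  obtain ⟨hlog0, hxlog⟩ := hlog_facts x hxIoo
  have hAx := hA_bound x hxIoo
  have hBx := hB_bound x hxIoo
  have hsx : 0 < sDen μ σ (1/2) x := hs_pos x
  have hsxE : sDen μ σ (1/2) x ≤ E := hs_le x ⟨hx0.le, hx1.le⟩
  -- bound on |D1 x|
  have hD1abs : |D1 x| ≤ 2 / S1 * E * (Ch * Real.log (1 / x) + Cg) := by
    rw [hD1def]
    simp only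
    rw [abs_mul, abs_mul]
    have h1 : |2 / S1| = 2 / S1 := abs_of_pos (div_pos two_pos hS1_pos)
    have h2 : |sDen μ σ (1/2) x| = sDen μ σ (1/2) x := abs_of_pos hsx
    rw [h1, h2]
    have h3 : |A x - B x| ≤ Ch * Real.log (1 / x) + Cg := by
      calc |A x - B x| ≤ |A x| + |B x| := abs_sub _ _
        _ ≤ Ch * Real.log (1 / x) + Cg := add_le_add hAx hBx
    have h4 : 0 ≤ Ch * Real.log (1 / x) + Cg :=
      add_nonneg (mul_nonneg hCh_pos.le hlog0) hCg_pos.le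
    calc 2 / S1 * (sDen μ σ (1/2) x * |A x - B x|)
        ≤ 2 / S1 * (E * (Ch * Real.log (1 / x) + Cg)) := by
          apply mul_le_mul_of_nonneg_left _ (div_pos two_pos hS1_pos).le
          exact mul_le_mul hsxE h3 (abs_nonneg _) hE_pos.le
      _ = 2 / S1 * E * (Ch * Real.log (1 / x) + Cg) := by ring
  have hxD1 : x * |D1 x| ≤ K0 := by
    have h1 : x * |D1 x| ≤ x * (2 / S1 * E * (Ch * Real.log (1 / x) + Cg)) :=
      mul_le_mul_of_nonneg_left hD1abs hx0.le
    have h2 : Ch * (x * Real.log (1 / x)) + Cg * x ≤ Ch + Cg := by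
      have h2a : Ch * (x * Real.log (1 / x)) ≤ Ch * 1 :=
        mul_le_mul_of_nonneg_left hxlog hCh_pos.le
      have h2b : Cg * x ≤ Cg * 1 := mul_le_mul_of_nonneg_left hx1.le hCg_pos.le
      linarith only [h2a, h2b]
    have h3 : x * (2 / S1 * E * (Ch * Real.log (1 / x) + Cg)) =
        2 / S1 * E * (Ch * (x * Real.log (1 / x)) + Cg * x) := by ring
    have h4 : 2 / S1 * E * (Ch * (x * Real.log (1 / x)) + Cg * x) ≤
        2 / S1 * E * (Ch + Cg) :=
      mul_le_mul_of_nonneg_left h2 (mul_pos (div_pos two_pos hS1_pos) hE_pos).le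
    rw [hK0]
    linarith only [h1, h3, h4]
  have hD1L : |D1 x| ≤ K0 * L := by
    have h1 : Ch * Real.log (1 / x) + Cg ≤ (Ch + Cg) * L := by
      have h1a : Ch * Real.log (1 / x) ≤ Ch * L := mul_le_mul_of_nonneg_left hLlog hCh_pos.le
      have h1b : Cg * 1 ≤ Cg * L := mul_le_mul_of_nonneg_left hL1 hCg_pos.le
      have : (Ch + Cg) * L = Ch * L + Cg * L := by ring
      linarith only [h1a, h1b, this]
    have h2 : 2 / S1 * E * (Ch * Real.log (1 / x) + Cg) ≤ 2 / S1 * E * ((Ch + Cg) * L) :=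
      mul_le_mul_of_nonneg_left h1 (mul_pos (div_pos two_pos hS1_pos) hE_pos).le
    rw [hK0]
    calc |D1 x| ≤ 2 / S1 * E * (Ch * Real.log (1 / x) + Cg) := hD1abs
      _ ≤ 2 / S1 * E * ((Ch + Cg) * L) := h2
      _ = 2 / S1 * E * (Ch + Cg) * L := by ring
  -- bound on x * |D2 x|
  have hD2abs : x * |D2 x| ≤ K2 := by
    rw [hD2def]
    simp only
    have h1 : |(-c) * D1 x - 2 / σ ^ 2 * x⁻¹| ≤ |c| * |D1 x| + 2 / σ ^ 2 * x⁻¹ := by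
      calc |(-c) * D1 x - 2 / σ ^ 2 * x⁻¹| ≤ |(-c) * D1 x| + |2 / σ ^ 2 * x⁻¹| := abs_sub _ _
        _ = |c| * |D1 x| + 2 / σ ^ 2 * x⁻¹ := by
          rw [abs_mul, abs_mul, abs_neg]
          congr 1
          rw [abs_of_pos (div_pos two_pos hσ2), abs_of_pos (inv_pos.2 hx0)]
    have h2 : x * |(-c) * D1 x - 2 / σ ^ 2 * x⁻¹| ≤
        |c| * (x * |D1 x|) + 2 / σ ^ 2 * (x * x⁻¹) := by
      calc x * |(-c) * D1 x - 2 / σ ^ 2 * x⁻¹|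
          ≤ x * (|c| * |D1 x| + 2 / σ ^ 2 * x⁻¹) := mul_le_mul_of_nonneg_left h1 hx0.le
        _ = |c| * (x * |D1 x|) + 2 / σ ^ 2 * (x * x⁻¹) := by ring
    have h3 : x * x⁻¹ = 1 := mul_inv_cancel₀ hx0.ne'
    rw [hK2]
    have h4 : |c| * (x * |D1 x|) ≤ |c| * K0 :=
      mul_le_mul_of_nonneg_left hxD1 (abs_nonneg c)
    rw [h3] at h2
    linarith only [h2, h4]
  -- bound on x^2 * |D3 x|
  have hD3abs : x ^ 2 * |D3 x| ≤ K3 := by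
    rw [hD3def]
    simp only
    have h1 : |(-c) * D2 x + 2 / σ ^ 2 * (x ^ 2)⁻¹| ≤
        |c| * |D2 x| + 2 / σ ^ 2 * (x ^ 2)⁻¹ := by
      calc |(-c) * D2 x + 2 / σ ^ 2 * (x ^ 2)⁻¹|
          ≤ |(-c) * D2 x| + |2 / σ ^ 2 * (x ^ 2)⁻¹| := abs_add_le _ _
        _ = |c| * |D2 x| + 2 / σ ^ 2 * (x ^ 2)⁻¹ := by
          rw [abs_mul, abs_mul, abs_neg]
          congr 1
          rw [abs_of_pos (div_pos two_pos hσ2), abs_of_pos (inv_pos.2 (pow_pos hx0 2))]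
    have h2 : x ^ 2 * |(-c) * D2 x + 2 / σ ^ 2 * (x ^ 2)⁻¹| ≤
        |c| * (x ^ 2 * |D2 x|) + 2 / σ ^ 2 * (x ^ 2 * (x ^ 2)⁻¹) := by
      calc x ^ 2 * |(-c) * D2 x + 2 / σ ^ 2 * (x ^ 2)⁻¹|
          ≤ x ^ 2 * (|c| * |D2 x| + 2 / σ ^ 2 * (x ^ 2)⁻¹) :=
            mul_le_mul_of_nonneg_left h1 (sq_nonneg x)
        _ = |c| * (x ^ 2 * |D2 x|) + 2 / σ ^ 2 * (x ^ 2 * (x ^ 2)⁻¹) := by ring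
    have h3 : x ^ 2 * (x ^ 2)⁻¹ = 1 := mul_inv_cancel₀ (pow_ne_zero 2 hx0.ne')
    have h4 : x ^ 2 * |D2 x| ≤ K2 := by
      have he : x ^ 2 * |D2 x| = x * (x * |D2 x|) := by ring
      rw [he]
      exact (mul_le_of_le_one_left (mul_nonneg hx0.le (abs_nonneg _)) hx1.le).trans hD2abs
    rw [hK3]
    have h5 : |c| * (x ^ 2 * |D2 x|) ≤ |c| * K2 :=
      mul_le_mul_of_nonneg_left h4 (abs_nonneg c)
    rw [h3] at h2
    linarith only [h2, h5]
  -- combine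
  rw [hderiv1 x hxIoo, hderiv2 x hxIoo, hderiv3 x hxIoo]
  have ht1 : |D1 x| / L ≤ K0 := by
    rw [div_le_iff₀ hLpos]
    exact hD1L
  linarith only [ht1, hD2abs, hD3abs]
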